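/- With A and H as in the infinite counterexample (A free abelian on e_k, g_k, h_k; H generated by e_k+g_k+h_k, g_k+e_{k+1}, h_k+e_{k+1} for all k ≥ 1), the quotient A/H is isomorphic to the additive group ℤ[1/2] of dyadic rationals, via e_k ↦ 1/2^{k-1}, g_k ↦ −1/2^k, h_k ↦ −1/2^k. -/

import Mathlib

/-- The additive group of dyadic rationals, as a subgroup of `ℚ`. -/
noncomputable def DyadicSubgroup : AddSubgroup ℚ :=
  AddSubgroup.closure (Set.range fun k : ℕ => (1 : ℚ) / 2 ^ k)

/-- The free abelian group on the basis `{e_k, g_k, h_k : k ∈ ℕ}`. -/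
abbrev FA : Type := (Fin 3 × ℕ) →₀ ℤ

noncomputable def eGen (k : ℕ) : FA := Finsupp.single (0, k) 1
noncomputable def gGen (k : ℕ) : FA := Finsupp.single (1, k) 1
noncomputable def hGen (k : ℕ) : FA := Finsupp.single (2, k) 1

/-- The subgroup generated by `e_k+g_k+h_k`, `g_k+e_{k+1}`, `h_k+e_{k+1}`. -/
noncomputable def Hsub : AddSubgroup FA :=
  AddSubgroup.closure
    ((Set.range fun k : ℕ => eGen k + gGen k + hGen k) ∪
      (Set.range fun k : ℕ => gGen k + eGen (k + 1)) ∪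
      (Set.range fun k : ℕ => hGen k + eGen (k + 1)))


noncomputable def cval (p : Fin 3 × ℕ) : ℚ :=
  if p.1 = 0 then 1 / 2 ^ p.2 else -(1 / 2 ^ (p.2 + 1))

noncomputable def fmap : FA →+ ℚ :=
  Finsupp.liftAddHom (fun p => zmultiplesHom ℚ (cval p))

lemma fmap_single (p : Fin 3 × ℕ) (a : ℤ) : fmap (Finsupp.single p a) = a • cval p := by
  simp [fmap]

lemma fmap_e (k : ℕ) : fmap (eGen k) = 1 / 2 ^ k := by
  simp [eGen, fmap_single, cval]

lemma fmap_g (k : ℕ) : fmap (gGen k) = -(1 / 2 ^ (k + 1)) := by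
  simp [gGen, fmap_single, cval]

lemma fmap_h (k : ℕ) : fmap (hGen k) = -(1 / 2 ^ (k + 1)) := by
  simp [hGen, fmap_single, cval]

lemma hker : Hsub ≤ fmap.ker := by
  rw [Hsub, AddSubgroup.closure_le]
  rintro x ((⟨k, rfl⟩ | ⟨k, rfl⟩) | ⟨k, rfl⟩) <;>
    simp [AddMonoidHom.mem_ker, fmap_e, fmap_g, fmap_h, pow_succ] <;> ring

lemma mk_g (k : ℕ) :
    (QuotientAddGroup.mk (gGen k) : FA ⧸ Hsub) = -QuotientAddGroup.mk (eGen (k + 1)) := by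
  rw [eq_neg_iff_add_eq_zero, ← QuotientAddGroup.mk_add, QuotientAddGroup.eq_zero_iff]
  exact AddSubgroup.subset_closure (Or.inl (Or.inr ⟨k, rfl⟩))

lemma mk_h (k : ℕ) :
    (QuotientAddGroup.mk (hGen k) : FA ⧸ Hsub) = -QuotientAddGroup.mk (eGen (k + 1)) := by
  rw [eq_neg_iff_add_eq_zero, ← QuotientAddGroup.mk_add, QuotientAddGroup.eq_zero_iff]
  exact AddSubgroup.subset_closure (Or.inr ⟨k, rfl⟩)

lemma mk_e (k : ℕ) :
    (QuotientAddGroup.mk (eGen k) : FA ⧸ Hsub) = (2 : ℤ) • QuotientAddGroup.mk (eGen (k + 1)) := by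
  have h : eGen k + gGen k + hGen k ∈ Hsub :=
    AddSubgroup.subset_closure (Or.inl (Or.inl ⟨k, rfl⟩))
  have h0 : (QuotientAddGroup.mk (eGen k + gGen k + hGen k) : FA ⧸ Hsub) = 0 :=
    (QuotientAddGroup.eq_zero_iff _).2 h
  rw [QuotientAddGroup.mk_add, QuotientAddGroup.mk_add, mk_g, mk_h] at h0
  have h1 : (QuotientAddGroup.mk (eGen k) : FA ⧸ Hsub)
      = QuotientAddGroup.mk (eGen (k + 1)) + QuotientAddGroup.mk (eGen (k + 1)) := by
    rw [← sub_eq_zero, ← h0]; abel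
  rw [h1, two_zsmul]

lemma eShift (m k : ℕ) :
    (QuotientAddGroup.mk (eGen k) : FA ⧸ Hsub)
      = (2 ^ m : ℤ) • QuotientAddGroup.mk (eGen (k + m)) := by
  induction m generalizing k with
  | zero => simp
  | succ n ih =>
    rw [ih k, mk_e (k + n), smul_smul, ← pow_succ, ← add_assoc]

lemma exists_rep (x : FA) : ∃ (N : ℕ) (n : ℤ),
    (QuotientAddGroup.mk x : FA ⧸ Hsub) = n • QuotientAddGroup.mk (eGen N) := by
  induction x using Finsupp.induction with
  | zero => exact ⟨0, 0, by simp⟩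
  | single_add p a rest hp ha ih =>
    obtain ⟨N1, n1, h1⟩ := ih
    have single_rep : ∃ (N2 : ℕ) (n2 : ℤ),
        (QuotientAddGroup.mk (Finsupp.single p a) : FA ⧸ Hsub)
          = n2 • QuotientAddGroup.mk (eGen N2) := by
      obtain ⟨i, k⟩ := p
      have hsm : ∀ q : Fin 3 × ℕ, (Finsupp.single q a : FA) = a • Finsupp.single q (1 : ℤ) := by
        intro q; rw [Finsupp.smul_single, smul_eq_mul, mul_one]
      fin_cases i
      · exact ⟨k, a, by rw [hsm, QuotientAddGroup.mk_zsmul]; rfl⟩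
      · refine ⟨k + 1, -a, ?_⟩
        rw [hsm, QuotientAddGroup.mk_zsmul]
        show a • (QuotientAddGroup.mk (gGen k) : FA ⧸ Hsub) = _
        rw [mk_g, zsmul_neg, ← neg_zsmul]
      · refine ⟨k + 1, -a, ?_⟩
        rw [hsm, QuotientAddGroup.mk_zsmul]
        show a • (QuotientAddGroup.mk (hGen k) : FA ⧸ Hsub) = _
        rw [mk_h, zsmul_neg, ← neg_zsmul]
    obtain ⟨N2, n2, h2⟩ := single_rep
    refine ⟨max N1 N2, n2 * 2 ^ (max N1 N2 - N2) + n1 * 2 ^ (max N1 N2 - N1), ?_⟩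
    have e1 : N1 + (max N1 N2 - N1) = max N1 N2 := Nat.add_sub_cancel' (le_max_left _ _)
    have e2 : N2 + (max N1 N2 - N2) = max N1 N2 := Nat.add_sub_cancel' (le_max_right _ _)
    rw [QuotientAddGroup.mk_add, h1, h2, eShift (max N1 N2 - N2) N2,
      eShift (max N1 N2 - N1) N1, e1, e2, smul_smul, smul_smul, add_zsmul]

lemma memD (x : FA) : fmap x ∈ DyadicSubgroup := by
  induction x using Finsupp.induction with
  | zero => rw [map_zero]; exact AddSubgroup.zero_mem _
  | single_add p a rest hp ha ih =>
    rw [map_add]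
    refine AddSubgroup.add_mem _ ?_ ih
    rw [fmap_single]
    refine AddSubgroup.zsmul_mem _ ?_ _
    by_cases h : p.1 = 0
    · have : cval p = 1 / 2 ^ p.2 := by simp [cval, h]
      rw [this]; exact AddSubgroup.subset_closure ⟨p.2, rfl⟩
    · have : cval p = -(1 / 2 ^ (p.2 + 1)) := by simp [cval, h]
      rw [this]; exact AddSubgroup.neg_mem _ (AddSubgroup.subset_closure ⟨p.2 + 1, rfl⟩)

noncomputable def phi : (FA ⧸ Hsub) →+ DyadicSubgroup :=
  (QuotientAddGroup.lift Hsub fmap hker).codRestrict DyadicSubgroup (by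
    intro q
    induction q using QuotientAddGroup.induction_on with
    | H x => simpa using memD x)

lemma phi_mk (x : FA) : (phi (QuotientAddGroup.mk x) : ℚ) = fmap x := rfl

lemma phi_inj : Function.Injective phi := by
  rw [injective_iff_map_eq_zero]
  intro q hq
  induction q using QuotientAddGroup.induction_on with
  | H x =>
    obtain ⟨N, n, hrep⟩ := exists_rep x
    have h0 : fmap x = 0 := by
      have := congrArg (Subtype.val) hq
      simpa [phi_mk] using this
    have h1 : fmap x = (n : ℚ) * (1 / 2 ^ N) := by
      have := congrArg (QuotientAddGroup.lift Hsub fmap hker) hrep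
      rw [QuotientAddGroup.lift_mk, map_zsmul, QuotientAddGroup.lift_mk, fmap_e] at this
      simpa [zsmul_eq_mul] using this
    have hn : n = 0 := by
      rw [h0] at h1
      have h2 : (n : ℚ) = 0 := by
        rcases mul_eq_zero.1 h1.symm with h | h
        · exact h
        · exact absurd h (by positivity)
      exact_mod_cast h2
    rw [hrep, hn]; exact zero_zsmul _

lemma phi_surj : Function.Surjective phi := by
  rintro ⟨v, hv⟩
  suffices h : ∃ q, (phi q : ℚ) = v by
    obtain ⟨q, hq⟩ := h; exact ⟨q, Subtype.ext hq⟩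
  induction hv using AddSubgroup.closure_induction with
  | mem x hx =>
    obtain ⟨k, rfl⟩ := hx
    exact ⟨QuotientAddGroup.mk (eGen k), by rw [phi_mk, fmap_e]⟩
  | zero => exact ⟨0, by simp⟩
  | add x y hx hy ihx ihy =>
    obtain ⟨q1, h1⟩ := ihx; obtain ⟨q2, h2⟩ := ihy
    exact ⟨q1 + q2, by rw [map_add]; push_cast [h1, h2]; ring⟩
  | neg x hx ihx =>
    obtain ⟨q, h⟩ := ihx
    exact ⟨-q, by rw [map_neg]; push_cast [h]; ring⟩


/-- `A/H` is isomorphic to `ℤ[1/2]` via `e_k ↦ 1/2^k`, `g_k, h_k ↦ -1/2^(k+1)`. -/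
theorem stmt15 :
    ∃ φ : (FA ⧸ Hsub) ≃+ DyadicSubgroup,
      (∀ k : ℕ, ((φ (QuotientAddGroup.mk (eGen k)) : ℚ)) = 1 / 2 ^ k) ∧
      (∀ k : ℕ, ((φ (QuotientAddGroup.mk (gGen k)) : ℚ)) = -(1 / 2 ^ (k + 1))) ∧
      (∀ k : ℕ, ((φ (QuotientAddGroup.mk (hGen k)) : ℚ)) = -(1 / 2 ^ (k + 1))) := by
  refine ⟨AddEquiv.ofBijective phi (show Function.Bijective phi from ⟨phi_inj, phi_surj⟩), ?_, ?_, ?_⟩ <;> intro k <;>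
    simp only [AddEquiv.ofBijective_apply, phi_mk, fmap_e, fmap_g, fmap_h]
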